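/- In any local swap equilibrium of a local 2-type Swap Schelling Game on a 2×h 4-neighbor grid with h ≥ 3, if x agents have utility 0 then at least x agents have utility at least 2/3; consequently the average utility is at least 1/3 and the Local Price of Anarchy of 2×h 4-grids is at most 3. -/

import Mathlib

open SimpleGraph Finset
open scoped Classical

noncomputable def ssgUtil {V A : Type*} [Fintype V] [DecidableEq V]
    (G : SimpleGraph V) [DecidableRel G.Adj]
    {k : ℕ} (c : A → Fin k) (σ : A ≃ V) (i : A) : ℚ :=
  (((G.neighborFinset (σ i)).filter (fun v => c (σ.symm v) = c i)).card : ℚ) /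
    (G.degree (σ i) : ℚ)

def ssgSwap {V A : Type*} [DecidableEq V] (σ : A ≃ V) (i j : A) : A ≃ V :=
  σ.trans (Equiv.swap (σ i) (σ j))

def ssgProfitable {V A : Type*} [Fintype V] [DecidableEq V]
    (G : SimpleGraph V) [DecidableRel G.Adj]
    {k : ℕ} (c : A → Fin k) (σ : A ≃ V) (i j : A) : Prop :=
  c i ≠ c j ∧
    ssgUtil G c σ i < ssgUtil G c (ssgSwap σ i j) i ∧
    ssgUtil G c σ j < ssgUtil G c (ssgSwap σ i j) j

def ssgEquilibrium {V A : Type*} [Fintype V] [DecidableEq V]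
    (G : SimpleGraph V) [DecidableRel G.Adj]
    {k : ℕ} (c : A → Fin k) (σ : A ≃ V) : Prop :=
  ∀ i j : A, ¬ ssgProfitable G c σ i j

def ssgLocalEquilibrium {V A : Type*} [Fintype V] [DecidableEq V]
    (G : SimpleGraph V) [DecidableRel G.Adj]
    {k : ℕ} (c : A → Fin k) (σ : A ≃ V) : Prop :=
  ∀ i j : A, G.Adj (σ i) (σ j) → ¬ ssgProfitable G c σ i j

noncomputable def ssgWelfare {V A : Type*} [Fintype V] [DecidableEq V] [Fintype A]
    (G : SimpleGraph V) [DecidableRel G.Adj]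
    {k : ℕ} (c : A → Fin k) (σ : A ≃ V) : ℚ :=
  ∑ i : A, ssgUtil G c σ i

noncomputable def ssgPhi {V A : Type*} [Fintype V] [DecidableEq V]
    (G : SimpleGraph V) [DecidableRel G.Adj]
    {k : ℕ} (c : A → Fin k) (σ : A ≃ V) : ℕ :=
  (G.edgeFinset.filter (fun e => ∀ u ∈ e, ∀ v ∈ e, c (σ.symm u) = c (σ.symm v))).card


def grid4 (l h : ℕ) : SimpleGraph (Fin l × Fin h) where
  Adj p q := Nat.dist p.1.val q.1.val + Nat.dist p.2.val q.2.val = 1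
  symm := by
    constructor
    intro p q hpq
    rwa [Nat.dist_comm p.1.val, Nat.dist_comm p.2.val] at hpq
  loopless := by constructor; intro p hp; simp [Nat.dist_self] at hp

instance (l h : ℕ) : DecidableRel (grid4 l h).Adj :=
  fun p q => inferInstanceAs (Decidable
    (Nat.dist p.1.val q.1.val + Nat.dist p.2.val q.2.val = 1))


lemma grid4_adj' {h : ℕ} {p q : Fin 2 × Fin h} :
    (grid4 2 h).Adj p q ↔
      (p.1.val ≠ q.1.val ∧ p.2 = q.2) ∨
      (p.1 = q.1 ∧ (p.2.val + 1 = q.2.val ∨ q.2.val + 1 = p.2.val)) := by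
  show Nat.dist p.1.val q.1.val + Nat.dist p.2.val q.2.val = 1 ↔ _
  have h1 : p.1.val < 2 := p.1.isLt
  have h2 : q.1.val < 2 := q.1.isLt
  constructor
  · intro hd
    simp [Nat.dist] at hd
    by_cases hc : p.1.val = q.1.val
    · right; exact ⟨Fin.ext hc, by omega⟩
    · left; exact ⟨hc, Fin.ext (by omega)⟩
  · intro hd
    simp [Nat.dist]
    rcases hd with ⟨h1', h2'⟩ | ⟨h1', h2'⟩
    · have : p.2.val = q.2.val := congrArg Fin.val h2'
      omega
    · have : p.1.val = q.1.val := congrArg Fin.val h1'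
      omega

def fflip (a : Fin 2) : Fin 2 := ⟨1 - a.val, by omega⟩

lemma fflip_ne (a : Fin 2) : fflip a ≠ a := by
  have := a.isLt
  intro hc
  have := congrArg Fin.val hc
  simp [fflip] at this
  omega

lemma fflip_val (a : Fin 2) : (fflip a).val ≠ a.val := fun hc => fflip_ne a (Fin.ext hc)

lemma grid4_deg_le {h : ℕ} (v : Fin 2 × Fin h) : (grid4 2 h).degree v ≤ 3 := by
  have hpos : 0 < h := v.2.pos
  rw [← SimpleGraph.card_neighborFinset_eq_degree]
  have hsub : (grid4 2 h).neighborFinset v ⊆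
      {(fflip v.1, v.2), (v.1, ⟨v.2.val - 1, by omega⟩),
        (v.1, ⟨min (v.2.val + 1) (h - 1), by omega⟩)} := by
    intro q hq
    rw [SimpleGraph.mem_neighborFinset, grid4_adj'] at hq
    simp only [mem_insert, mem_singleton]
    rcases hq with ⟨h1', h2'⟩ | ⟨h1', h2'⟩
    · left
      have : q.1 = fflip v.1 := by
        apply Fin.ext; have := v.1.isLt; have := q.1.isLt; simp [fflip]; omega
      rw [Prod.ext_iff]; exact ⟨this.symm ▸ rfl, h2'.symm⟩
    · rcases h2' with h2' | h2'
      · right; right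
        rw [Prod.ext_iff]
        refine ⟨h1'.symm, Fin.ext ?_⟩
        have := q.2.isLt
        simp; omega
      · right; left
        rw [Prod.ext_iff]
        exact ⟨h1'.symm, Fin.ext (by simp; omega)⟩
  calc ((grid4 2 h).neighborFinset v).card ≤ _ := Finset.card_le_card hsub
    _ ≤ 3 := by
        apply le_trans (Finset.card_insert_le _ _)
        apply Nat.succ_le_succ
        apply le_trans (Finset.card_insert_le _ _)
        simp

lemma grid4_deg_ge {h : ℕ} (hh : 3 ≤ h) (v : Fin 2 × Fin h) : 2 ≤ (grid4 2 h).degree v := by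
  rw [← SimpleGraph.card_neighborFinset_eq_degree]
  set b' : Fin h := if v.2.val = 0 then ⟨1, by omega⟩ else ⟨v.2.val - 1, by omega⟩ with hb'
  have hadj1 : (grid4 2 h).Adj v (fflip v.1, v.2) := by
    rw [grid4_adj']; exact Or.inl ⟨(fflip_val v.1).symm, rfl⟩
  have hadj2 : (grid4 2 h).Adj v (v.1, b') := by
    rw [grid4_adj']; right
    refine ⟨rfl, ?_⟩
    by_cases h0 : v.2.val = 0
    · left; simp [hb', h0]
    · right; simp [hb', h0]; omega
  have hsub : ({(fflip v.1, v.2), (v.1, b')} : Finset (Fin 2 × Fin h)) ⊆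
      (grid4 2 h).neighborFinset v := by
    intro q hq
    simp only [mem_insert, mem_singleton] at hq
    rcases hq with rfl | rfl
    · exact (SimpleGraph.mem_neighborFinset _ _ _).2 hadj1
    · exact (SimpleGraph.mem_neighborFinset _ _ _).2 hadj2
  have hcard : ({(fflip v.1, v.2), (v.1, b')} : Finset (Fin 2 × Fin h)).card = 2 := by
    rw [Finset.card_insert_of_notMem, Finset.card_singleton]
    simp only [mem_singleton]
    intro hc
    exact fflip_ne v.1 (congrArg Prod.fst hc)
  calc 2 = _ := hcard.symm
    _ ≤ _ := Finset.card_le_card hsub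

lemma grid4_nbhd_interior {h : ℕ} (v : Fin 2 × Fin h) (hb0 : 0 < v.2.val)
    (hb1 : v.2.val + 1 < h) :
    (grid4 2 h).neighborFinset v =
      {(fflip v.1, v.2), (v.1, ⟨v.2.val - 1, by omega⟩), (v.1, ⟨v.2.val + 1, hb1⟩)} := by
  ext q
  rw [SimpleGraph.mem_neighborFinset, grid4_adj']
  simp only [mem_insert, mem_singleton]
  constructor
  · intro hq
    rcases hq with ⟨h1', h2'⟩ | ⟨h1', h2'⟩
    · left
      rw [Prod.ext_iff]
      refine ⟨Fin.ext ?_, h2'.symm⟩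
      have := v.1.isLt; have := q.1.isLt; simp [fflip]; omega
    · rcases h2' with h2' | h2'
      · right; right; rw [Prod.ext_iff]; exact ⟨h1'.symm, Fin.ext (by simp; omega)⟩
      · right; left; rw [Prod.ext_iff]; exact ⟨h1'.symm, Fin.ext (by simp; omega)⟩
  · intro hq
    rcases hq with rfl | rfl | rfl
    · exact Or.inl ⟨(fflip_val v.1).symm, rfl⟩
    · exact Or.inr ⟨rfl, Or.inr (by simp; omega)⟩
    · exact Or.inr ⟨rfl, Or.inl (by simp)⟩

lemma grid4_deg_interior {h : ℕ} (v : Fin 2 × Fin h) (hb0 : 0 < v.2.val)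
    (hb1 : v.2.val + 1 < h) : (grid4 2 h).degree v = 3 := by
  rw [← SimpleGraph.card_neighborFinset_eq_degree, grid4_nbhd_interior v hb0 hb1]
  rw [Finset.card_insert_of_notMem, Finset.card_insert_of_notMem, Finset.card_singleton]
  · simp only [mem_singleton]
    intro hc
    have := congrArg (fun p => (Prod.snd p).val) hc
    simp at this
  · simp only [mem_insert, mem_singleton]
    rintro (hc | hc) <;> exact fflip_ne v.1 (congrArg Prod.fst hc)

lemma grid4_deg3_nbr {h : ℕ} (hh : 3 ≤ h) (v : Fin 2 × Fin h) :
    ∃ u, (grid4 2 h).Adj v u ∧ (grid4 2 h).degree u = 3 := by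
  by_cases h0 : v.2.val = 0
  · refine ⟨(v.1, ⟨1, by omega⟩), ?_, grid4_deg_interior _ (by simp) (by simp; omega)⟩
    rw [grid4_adj']; exact Or.inr ⟨rfl, Or.inl (by simp; omega)⟩
  · by_cases h1 : v.2.val = h - 1
    · refine ⟨(v.1, ⟨h - 2, by omega⟩), ?_, grid4_deg_interior _ (by simp; omega) (by simp; omega)⟩
      rw [grid4_adj']; exact Or.inr ⟨rfl, Or.inr (by simp; omega)⟩
    · refine ⟨(fflip v.1, v.2), ?_, grid4_deg_interior _ ?_ ?_⟩
      · rw [grid4_adj']; exact Or.inl ⟨(fflip_val v.1).symm, rfl⟩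
      · simp; omega
      · have := v.2.isLt; simp; omega

section Main

variable {h : ℕ} (hh : 3 ≤ h) (c : Fin 2 × Fin h → Fin 2)
  (σ : (Fin 2 × Fin h) ≃ (Fin 2 × Fin h))

local notation "G" => grid4 2 h

lemma two_colors (x ci cj : Fin 2) (hne : ci ≠ cj) (hx : x ≠ ci) : x = cj := by
  revert hx hne; revert x ci cj; decide

lemma util_nonneg (i : Fin 2 × Fin h) : 0 ≤ ssgUtil G c σ i :=
  div_nonneg (Nat.cast_nonneg _) (Nat.cast_nonneg _)

lemma util_le_one (hh : 3 ≤ h) (i : Fin 2 × Fin h) : ssgUtil G c σ i ≤ 1 := by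
  have hd : 0 < (grid4 2 h).degree (σ i) := lt_of_lt_of_le (by norm_num) (grid4_deg_ge hh _)
  rw [ssgUtil, div_le_one (by exact_mod_cast hd)]
  exact_mod_cast le_trans (Finset.card_le_card (Finset.filter_subset _ _))
    (le_of_eq (SimpleGraph.card_neighborFinset_eq_degree _ _))

lemma util_third (hh : 3 ≤ h) (i : Fin 2 × Fin h) (hne : ssgUtil G c σ i ≠ 0) :
    1 / 3 ≤ ssgUtil G c σ i := by
  rw [ssgUtil] at hne ⊢
  set s := (((grid4 2 h).neighborFinset (σ i)).filter (fun v => c (σ.symm v) = c i)).card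
  set d := (grid4 2 h).degree (σ i) with hd
  have hd2 : 2 ≤ d := grid4_deg_ge hh _
  have hd3 : d ≤ 3 := grid4_deg_le _
  have hs : 1 ≤ s := by
    by_contra hs
    push_neg at hs
    interval_cases s
    · simp at hne
  rw [div_le_div_iff₀ (by norm_num) (by exact_mod_cast lt_of_lt_of_le (by norm_num) hd2)]
  push_cast
  have : (1:ℚ) ≤ s := by exact_mod_cast hs
  have : (d:ℚ) ≤ 3 := by exact_mod_cast hd3
  nlinarith

lemma key_lemma (hh : 3 ≤ h) (heq : ssgLocalEquilibrium G c σ)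
    (i : Fin 2 × Fin h) (hi : ssgUtil G c σ i = 0) :
    ∃ j : Fin 2 × Fin h,
      σ i ∈ ((grid4 2 h).neighborFinset (σ j)).filter (fun v => c (σ.symm v) ≠ c j) ∧
      2 / 3 ≤ ssgUtil G c σ j ∧
      (((grid4 2 h).neighborFinset (σ j)).filter (fun v => c (σ.symm v) ≠ c j)).card ≤ 1 := by
  obtain ⟨u, hadj, hdeg⟩ := grid4_deg3_nbr hh (σ i)
  set j := σ.symm u with hj
  have hσj : σ j = u := σ.apply_symm_apply u
  have hadj' : (grid4 2 h).Adj (σ i) (σ j) := hσj ▸ hadj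
  have hdpos : (0:ℚ) < ((grid4 2 h).degree (σ i) : ℚ) := by
    exact_mod_cast lt_of_lt_of_le (by norm_num) (grid4_deg_ge hh (σ i))
  -- all neighbors of σ i have the opposite color
  have hempty : ∀ v ∈ (grid4 2 h).neighborFinset (σ i), c (σ.symm v) ≠ c i := by
    rw [ssgUtil, div_eq_zero_iff] at hi
    rcases hi with hi | hi
    · have : (((grid4 2 h).neighborFinset (σ i)).filter
          (fun v => c (σ.symm v) = c i)).card = 0 := by exact_mod_cast hi
      rw [Finset.card_eq_zero, Finset.filter_eq_empty_iff] at this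
      exact this
    · exact absurd hi (ne_of_gt hdpos)
  have hcj : c j ≠ c i := by
    have := hempty (σ j) ((SimpleGraph.mem_neighborFinset _ _ _).2 hadj')
    simpa using this
  have hci : c i ≠ c j := hcj.symm
  -- every neighbor of σ i has color c j
  have hallcj : ∀ v ∈ (grid4 2 h).neighborFinset (σ i), c (σ.symm v) = c j :=
    fun v hv => two_colors _ _ _ hci (hempty v hv)
  -- equilibrium
  have hnp := heq i j hadj'
  rw [ssgProfitable] at hnp
  push_neg at hnp
  have hcase := hnp hci
  -- swap facts
  have hswap_i : (ssgSwap σ i j) i = σ j := by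
    simp [ssgSwap, Equiv.swap_apply_left]
  have hswap_j : (ssgSwap σ i j) j = σ i := by
    simp [ssgSwap, Equiv.swap_apply_right]
  have hswap_symm : ∀ v, (ssgSwap σ i j).symm v = σ.symm (Equiv.swap (σ i) (σ j) v) := by
    intro v; simp [ssgSwap]
  -- the "same color" set of j
  set S := ((grid4 2 h).neighborFinset (σ j)).filter (fun v => c (σ.symm v) = c j) with hS
  have hSd : S.card + (((grid4 2 h).neighborFinset (σ j)).filter
      (fun v => c (σ.symm v) ≠ c j)).card = 3 := by
    rw [hS, Finset.card_filter_add_card_filter_not,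
      SimpleGraph.card_neighborFinset_eq_degree, hσj, hdeg]
  have hdeg' : (grid4 2 h).degree (σ j) = 3 := by rw [hσj]; exact hdeg
  have hUj : ssgUtil G c σ j = (S.card : ℚ) / 3 := by
    rw [ssgUtil, hdeg', hS]; norm_num
  -- main claim: S.card ≥ 2
  have hS2 : 2 ≤ S.card := by
    rcases Classical.em (ssgUtil G c (ssgSwap σ i j) i ≤ ssgUtil G c σ i) with hc1 | hc1
    · -- case X: after the swap, i still has utility 0
      rw [hi] at hc1
      have h0 : ssgUtil G c (ssgSwap σ i j) i = 0 :=
        le_antisymm hc1 (div_nonneg (Nat.cast_nonneg _) (Nat.cast_nonneg _))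
      rw [ssgUtil, div_eq_zero_iff, hswap_i] at h0
      have hdeg3 : ((grid4 2 h).degree (σ j) : ℚ) ≠ 0 := by
        rw [hσj, hdeg]; norm_num
      rcases h0 with h0 | h0
      swap
      · exact absurd h0 hdeg3
      have h0' : ∀ v ∈ (grid4 2 h).neighborFinset (σ j),
          c ((ssgSwap σ i j).symm v) ≠ c i := by
        have : (((grid4 2 h).neighborFinset ((ssgSwap σ i j) i)).filter
            (fun v => c ((ssgSwap σ i j).symm v) = c i)).card = 0 := by
          rw [hswap_i]; exact_mod_cast h0
        rw [Finset.card_eq_zero, Finset.filter_eq_empty_iff, hswap_i] at this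
        exact this
      -- neighbors of σ j other than σ i have color c j
      have hsub : ((grid4 2 h).neighborFinset (σ j)).erase (σ i) ⊆ S := by
        intro v hv
        rw [Finset.mem_erase] at hv
        obtain ⟨hvi, hvN⟩ := hv
        rw [hS, Finset.mem_filter]
        refine ⟨hvN, ?_⟩
        have hvj : v ≠ σ j := fun hc => (grid4 2 h).irrefl (hc ▸ (SimpleGraph.mem_neighborFinset _ _ _).1 hvN)
        have := h0' v hvN
        rw [hswap_symm, Equiv.swap_apply_of_ne_of_ne hvi hvj] at this
        exact two_colors _ _ _ hci this
      have : 2 ≤ (((grid4 2 h).neighborFinset (σ j)).erase (σ i)).card := by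
        rw [Finset.card_erase_of_mem ((SimpleGraph.mem_neighborFinset _ _ _).2 hadj'.symm),
          SimpleGraph.card_neighborFinset_eq_degree, hσj, hdeg]
      exact le_trans this (Finset.card_le_card hsub)
    · -- case Y: j does not improve
      push_neg at hc1
      have hc2 := hcase hc1
      -- compute utility of j after swap
      have hfilter : ((grid4 2 h).neighborFinset (σ i)).filter
          (fun v => c ((ssgSwap σ i j).symm v) = c j) =
          ((grid4 2 h).neighborFinset (σ i)).erase (σ j) := by
        ext v
        rw [Finset.mem_filter, Finset.mem_erase]
        constructor
        · rintro ⟨hvN, hvc⟩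
          refine ⟨?_, hvN⟩
          rintro rfl
          rw [hswap_symm, Equiv.swap_apply_right] at hvc
          simp at hvc
          exact hci hvc
        · rintro ⟨hvj, hvN⟩
          refine ⟨hvN, ?_⟩
          have hvi : v ≠ σ i := fun hc => (grid4 2 h).irrefl (hc ▸ (SimpleGraph.mem_neighborFinset _ _ _).1 hvN)
          rw [hswap_symm, Equiv.swap_apply_of_ne_of_ne hvi hvj]
          exact hallcj v hvN
      have hUj' : ssgUtil G c (ssgSwap σ i j) j =
          (((grid4 2 h).degree (σ i) : ℚ) - 1) / ((grid4 2 h).degree (σ i) : ℚ) := by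
        rw [ssgUtil, hswap_j, hfilter,
          Finset.card_erase_of_mem ((SimpleGraph.mem_neighborFinset _ _ _).2 hadj'),
          SimpleGraph.card_neighborFinset_eq_degree]
        have h1 : 1 ≤ (grid4 2 h).degree (σ i) :=
          le_trans (by norm_num) (grid4_deg_ge hh _)
        push_cast [h1]
        ring_nf
      -- so  U j ≥ (d-1)/d ≥ 1/2, hence S.card ≥ 2
      have hd2 : (2:ℚ) ≤ ((grid4 2 h).degree (σ i) : ℚ) := by
        exact_mod_cast grid4_deg_ge hh (σ i)
      have hhalf : (1:ℚ)/2 ≤ ssgUtil G c (ssgSwap σ i j) j := by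
        rw [hUj', div_le_div_iff₀ (by norm_num) hdpos]
        linarith
      have : (1:ℚ)/2 ≤ (S.card : ℚ) / 3 := by
        rw [← hUj]; exact le_trans hhalf hc2
      rw [div_le_div_iff₀ (by norm_num) (by norm_num)] at this
      have h3q : (3:ℚ) ≤ 2 * S.card := by linarith
      have h3 : (3:ℕ) ≤ 2 * S.card := by exact_mod_cast h3q
      omega
  refine ⟨j, ?_, ?_, ?_⟩
  · rw [Finset.mem_filter]
    refine ⟨(SimpleGraph.mem_neighborFinset _ _ _).2 hadj'.symm, ?_⟩
    simpa using hci
  · rw [hUj, div_le_div_iff₀ (by norm_num) (by norm_num)]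
    push_cast
    have : (2:ℚ) ≤ S.card := by exact_mod_cast hS2
    linarith
  · omega

end Main

theorem stmt19 (h : ℕ) (hh : 3 ≤ h)
    (c : Fin 2 × Fin h → Fin 2) (σ : (Fin 2 × Fin h) ≃ (Fin 2 × Fin h))
    (heq : ssgLocalEquilibrium (grid4 2 h) c σ) :
    (Finset.univ.filter
        (fun i : Fin 2 × Fin h => ssgUtil (grid4 2 h) c σ i = 0)).card ≤
      (Finset.univ.filter
        (fun i : Fin 2 × Fin h =>
          (2 : ℚ) / 3 ≤ ssgUtil (grid4 2 h) c σ i)).card ∧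
    (2 * (h : ℚ)) / 3 ≤ ssgWelfare (grid4 2 h) c σ ∧
    ∀ σ' : (Fin 2 × Fin h) ≃ (Fin 2 × Fin h),
      ssgWelfare (grid4 2 h) c σ' ≤ 3 * ssgWelfare (grid4 2 h) c σ := by
  set U := ssgUtil (grid4 2 h) c σ with hU
  set Z := Finset.univ.filter (fun i : Fin 2 × Fin h => U i = 0) with hZ
  set W := Finset.univ.filter (fun i : Fin 2 × Fin h => (2:ℚ)/3 ≤ U i) with hW
  -- the injection
  have hZW : Z.card ≤ W.card := by
    classical
    set D : (Fin 2 × Fin h) → Finset (Fin 2 × Fin h) := fun j =>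
      ((grid4 2 h).neighborFinset (σ j)).filter (fun v => c (σ.symm v) ≠ c j) with hD
    have key : ∀ i ∈ Z, ∃ j, σ i ∈ D j ∧ (2:ℚ)/3 ≤ U j ∧ (D j).card ≤ 1 := by
      intro i hi
      rw [hZ, Finset.mem_filter] at hi
      exact key_lemma c σ hh heq i hi.2
    choose f hf1 hf2 hf3 using key
    have : ∀ p : { x // x ∈ Z }, True := fun _ => trivial
    apply Finset.card_le_card_of_injOn (fun i => if hi : i ∈ Z then f i hi else i)
    · intro i hi
      rw [Finset.mem_coe] at hi
      rw [Finset.mem_coe, hW, Finset.mem_filter]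
      refine ⟨Finset.mem_univ _, ?_⟩
      simp only [dif_pos hi]
      exact hf2 i hi
    · intro i1 hi1 i2 hi2 hf
      simp only [Finset.mem_coe] at hi1 hi2
      simp only [dif_pos hi1, dif_pos hi2] at hf
      have m1 : σ i1 ∈ D (f i1 hi1) := hf1 i1 hi1
      have m2 : σ i2 ∈ D (f i1 hi1) := by rw [hf]; exact hf1 i2 hi2
      have := Finset.card_le_one.mp (hf3 i1 hi1) _ m1 _ m2
      exact σ.injective this
  have hwel : (2 * (h : ℚ)) / 3 ≤ ssgWelfare (grid4 2 h) c σ := by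
    have hsplit1 : ∑ i, U i = ∑ i ∈ W, U i + ∑ i ∈ Finset.univ.filter
        (fun i => ¬ ((2:ℚ)/3 ≤ U i)), U i := by
      rw [hW]
      exact (Finset.sum_filter_add_sum_filter_not _ _ _).symm
    set Wc := Finset.univ.filter (fun i : Fin 2 × Fin h => ¬ ((2:ℚ)/3 ≤ U i)) with hWc
    have hsplit2 : ∑ i ∈ Wc, U i = ∑ i ∈ Wc.filter (fun i => U i = 0), U i +
        ∑ i ∈ Wc.filter (fun i => ¬ (U i = 0)), U i :=
      (Finset.sum_filter_add_sum_filter_not _ _ _).symm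
    have hZeq : Wc.filter (fun i => U i = 0) = Z := by
      rw [hWc, hZ, Finset.filter_filter]
      apply Finset.filter_congr
      intro i _
      constructor
      · rintro ⟨_, h2⟩; exact h2
      · intro h2
        refine ⟨?_, h2⟩
        rw [h2]; norm_num
    have hsum0 : ∑ i ∈ Wc.filter (fun i => U i = 0), U i = 0 := by
      apply Finset.sum_eq_zero
      intro i hi
      exact (Finset.mem_filter.mp hi).2
    have hsumW : (W.card : ℚ) * (2/3) ≤ ∑ i ∈ W, U i := by
      have := Finset.card_nsmul_le_sum W U (2/3)
        (fun i hi => (Finset.mem_filter.mp hi).2)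
      simpa [nsmul_eq_mul] using this
    have hsumR : ((Wc.filter (fun i => ¬ (U i = 0))).card : ℚ) * (1/3) ≤
        ∑ i ∈ Wc.filter (fun i => ¬ (U i = 0)), U i := by
      have := Finset.card_nsmul_le_sum (Wc.filter (fun i => ¬ (U i = 0))) U (1/3)
        (fun i hi => util_third c σ hh i (Finset.mem_filter.mp hi).2)
      simpa [nsmul_eq_mul] using this
    have hcard1 : W.card + Wc.card = 2 * h := by
      rw [hW, hWc, Finset.card_filter_add_card_filter_not]
      simp [Fintype.card_prod]
    have hcard2 : Z.card + (Wc.filter (fun i => ¬ (U i = 0))).card = Wc.card := by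
      rw [← hZeq]
      exact Finset.card_filter_add_card_filter_not _
    rw [ssgWelfare, ← hU, hsplit1, hsplit2, hsum0, zero_add]
    have e1 : (W.card : ℚ) ≥ Z.card := by exact_mod_cast hZW
    have e2 : ((Wc.filter (fun i => ¬ (U i = 0))).card : ℚ) = Wc.card - Z.card := by
      have : ((Z.card : ℚ)) + (Wc.filter (fun i => ¬ (U i = 0))).card = Wc.card := by
        exact_mod_cast hcard2
      linarith
    have e3 : (W.card : ℚ) + Wc.card = 2 * h := by exact_mod_cast hcard1
    calc (2 * (h:ℚ)) / 3 ≤ (W.card : ℚ) * (2/3) +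
          ((Wc.filter (fun i => ¬ (U i = 0))).card : ℚ) * (1/3) := by
          rw [e2]; linarith
      _ ≤ _ := add_le_add hsumW hsumR
  refine ⟨hZW, hwel, ?_⟩
  · intro σ'
    have h1 : ssgWelfare (grid4 2 h) c σ' ≤ 2 * h := by
      rw [ssgWelfare]
      calc ∑ i, ssgUtil (grid4 2 h) c σ' i ≤ ∑ _i : Fin 2 × Fin h, (1:ℚ) :=
            Finset.sum_le_sum (fun i _ => util_le_one c σ' hh i)
        _ = 2 * h := by simp [Fintype.card_prod]
    linarith [hwel]
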